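/- Let $A \subseteq \mathbb{R}^{d}$ be any measurable set, $W \sim N(0, I_d)$, and $\bar{W} = W \cdot \mathbf{1}\{W \in A\}$. If $\mathbf{P}(W \notin A) \leq 1/12$, then $\frac{1}{2} I \preccurlyeq \mathbb{E}[\bar{W}\bar{W}^\top] \preccurlyeq I$. -/

import Mathlib

open MeasureTheory ProbabilityTheory Real
open scoped ENNReal NNReal

namespace TruncGauss


lemma integrable_pow_mul_exp (k : ℕ) :
    Integrable (fun x : ℝ => x ^ k * rexp (-(1/2) * x ^ 2)) := by
  have h := integrable_rpow_mul_exp_neg_mul_sq (b := 1/2) (by norm_num)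
    (s := (k : ℝ)) (by have := Nat.cast_nonneg (α:=ℝ) k; linarith)
  simpa [Real.rpow_natCast] using h

lemma integral_odd_pow_mul_exp (k : ℕ) (hk : Odd k) :
    ∫ x : ℝ, x ^ k * rexp (-(1/2) * x ^ 2) = 0 := by
  have h : ∫ x : ℝ, (-x) ^ k * rexp (-(1/2) * (-x) ^ 2)
      = ∫ x : ℝ, x ^ k * rexp (-(1/2) * x ^ 2) := integral_neg_eq_self (fun x : ℝ => x ^ k * rexp (-(1/2) * x ^ 2)) volume
  rw [show (fun x : ℝ => (-x) ^ k * rexp (-(1/2) * (-x) ^ 2))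
      = fun x : ℝ => -(x ^ k * rexp (-(1/2) * x ^ 2)) by
    funext x; rw [hk.neg_pow, neg_sq]; ring] at h
  rw [integral_neg] at h
  linarith

lemma integral_even_pow_mul_exp (k : ℕ) (hk : Even k) :
    ∫ x : ℝ, x ^ k * rexp (-(1/2) * x ^ 2)
      = 2 * ((1/2 : ℝ) ^ (-((k : ℝ) + 1) / 2) * (1 / 2) * Gamma (((k : ℝ) + 1) / 2)) := by
  have hint := integrable_pow_mul_exp k
  have hIoi : ∫ x in Set.Ioi (0:ℝ), x ^ k * rexp (-(1/2) * x ^ 2)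
      = (1/2 : ℝ) ^ (-((k : ℝ) + 1) / 2) * (1 / 2) * Gamma (((k : ℝ) + 1) / 2) := by
    have h := integral_rpow_mul_exp_neg_mul_rpow (p := 2) (q := (k : ℝ)) (b := 1/2)
      (by norm_num) (by have := Nat.cast_nonneg (α:=ℝ) k; linarith) (by norm_num)
    rw [← h]
    refine setIntegral_congr_fun measurableSet_Ioi (fun x hx => ?_)
    rw [Real.rpow_natCast, Real.rpow_two]
  have hIic : ∫ x in Set.Iic (0:ℝ), x ^ k * rexp (-(1/2) * x ^ 2)
      = ∫ x in Set.Ioi (0:ℝ), x ^ k * rexp (-(1/2) * x ^ 2) := by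
    rw [← neg_zero, ← integral_comp_neg_Ioi, neg_zero]
    refine setIntegral_congr_fun measurableSet_Ioi (fun x _ => ?_)
    rw [hk.neg_pow, neg_sq]
  rw [← intervalIntegral.integral_Iic_add_Ioi (b := 0) hint.integrableOn hint.integrableOn,
    hIic, hIoi]
  ring


lemma pdf01 (x : ℝ) : gaussianPDFReal 0 1 x = (√(2 * π))⁻¹ * rexp (-(1/2) * x ^ 2) := by
  rw [gaussianPDFReal]
  norm_num
  rw [show -x ^ 2 / 2 = -(1/2) * x ^ 2 from by ring]
  exact Or.inl (by ring)

lemma integral_gaussianReal_eq (g : ℝ → ℝ) :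
    ∫ x, g x ∂(gaussianReal 0 1) = ∫ x, gaussianPDFReal 0 1 x * g x := by
  rw [gaussianReal_of_var_ne_zero 0 one_ne_zero]
  have hmeas : Measurable fun x => (gaussianPDFReal 0 1 x).toNNReal :=
    (measurable_gaussianPDFReal 0 1).real_toNNReal
  have : (volume.withDensity (gaussianPDF 0 1))
      = volume.withDensity (fun x => ((gaussianPDFReal 0 1 x).toNNReal : ℝ≥0∞)) := rfl
  rw [this, integral_withDensity_eq_integral_smul hmeas]
  congr 1 with x
  rw [NNReal.smul_def, smul_eq_mul, Real.coe_toNNReal _ (gaussianPDFReal_nonneg 0 1 x)]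

lemma integrable_gaussianReal_iff (g : ℝ → ℝ) :
    Integrable g (gaussianReal 0 1) ↔ Integrable (fun x => gaussianPDFReal 0 1 x * g x) := by
  rw [gaussianReal_of_var_ne_zero 0 one_ne_zero]
  have hmeas : Measurable fun x => (gaussianPDFReal 0 1 x).toNNReal :=
    (measurable_gaussianPDFReal 0 1).real_toNNReal
  have h : (volume.withDensity (gaussianPDF 0 1))
      = volume.withDensity (fun x => ((gaussianPDFReal 0 1 x).toNNReal : ℝ≥0∞)) := rfl
  rw [h, integrable_withDensity_iff_integrable_smul hmeas]
  apply integrable_congr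
  filter_upwards with x
  rw [NNReal.smul_def, smul_eq_mul, Real.coe_toNNReal _ (gaussianPDFReal_nonneg 0 1 x)]

lemma integrable_pow_gaussianReal (k : ℕ) :
    Integrable (fun x => x ^ k) (gaussianReal 0 1) := by
  rw [integrable_gaussianReal_iff]
  have h := ((integrable_pow_mul_exp k).const_mul (√(2 * π))⁻¹)
  apply h.congr
  filter_upwards with x
  rw [pdf01]; ring

lemma integral_pow_gaussianReal (k : ℕ) :
    ∫ x, x ^ k ∂(gaussianReal 0 1)
      = (√(2 * π))⁻¹ * ∫ x : ℝ, x ^ k * rexp (-(1/2) * x ^ 2) := by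
  rw [integral_gaussianReal_eq, ← integral_const_mul]
  congr 1 with x
  rw [pdf01]; ring

lemma moment1 : ∫ x, x ∂(gaussianReal 0 1) = 0 := by
  have h := integral_pow_gaussianReal 1
  have h0 := integral_odd_pow_mul_exp 1 ⟨0, by norm_num⟩
  simp only [pow_one] at h h0
  rw [h, h0, mul_zero]

lemma moment3 : ∫ x, x ^ 3 ∂(gaussianReal 0 1) = 0 := by
  rw [integral_pow_gaussianReal 3, integral_odd_pow_mul_exp 3 ⟨1, by norm_num⟩, mul_zero]

lemma half_rpow (r : ℝ) : (1/2:ℝ) ^ r = (2:ℝ) ^ (-r) := by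
  rw [one_div, Real.inv_rpow (by norm_num), ← Real.rpow_neg (by norm_num)]

lemma rpow_3_2 : (2:ℝ) ^ ((3:ℝ)/2) = 2 * √2 := by
  rw [show (3:ℝ)/2 = 1 + 1/2 by norm_num, Real.rpow_add (by norm_num), Real.rpow_one,
    ← Real.sqrt_eq_rpow]

lemma rpow_5_2 : (2:ℝ) ^ ((5:ℝ)/2) = 4 * √2 := by
  rw [show (5:ℝ)/2 = 2 + 1/2 by norm_num, Real.rpow_add (by norm_num), ← Real.sqrt_eq_rpow,
    show (2:ℝ) ^ (2:ℝ) = 4 by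
      rw [show (2:ℝ) = ((2:ℕ):ℝ) by norm_num, Real.rpow_natCast]; norm_num]

lemma gamma_3_2 : Real.Gamma ((3:ℝ)/2) = 1/2 * √π := by
  rw [show (3:ℝ)/2 = 1/2 + 1 by norm_num, Real.Gamma_add_one (by norm_num),
    Real.Gamma_one_half_eq]

lemma gamma_5_2 : Real.Gamma ((5:ℝ)/2) = 3/4 * √π := by
  rw [show (5:ℝ)/2 = 3/2 + 1 by norm_num, Real.Gamma_add_one (by norm_num), gamma_3_2]
  ring

lemma sqrt2_pos : (0:ℝ) < √2 := Real.sqrt_pos.mpr (by norm_num)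
lemma sqrtpi_pos : (0:ℝ) < √π := Real.sqrt_pos.mpr Real.pi_pos

lemma moment2 : ∫ x, x ^ 2 ∂(gaussianReal 0 1) = 1 := by
  rw [integral_pow_gaussianReal 2, integral_even_pow_mul_exp 2 ⟨1, by norm_num⟩]
  rw [show -(((2:ℕ):ℝ) + 1) / 2 = -((3:ℝ)/2) by norm_num,
    show (((2:ℕ):ℝ) + 1) / 2 = (3:ℝ)/2 by norm_num,
    half_rpow, neg_neg, rpow_3_2, gamma_3_2,
    Real.sqrt_mul (by norm_num : (0:ℝ) ≤ 2)]
  have h2 := sqrt2_pos; have hπ := sqrtpi_pos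
  field_simp

lemma moment4 : ∫ x, x ^ 4 ∂(gaussianReal 0 1) = 3 := by
  rw [integral_pow_gaussianReal 4, integral_even_pow_mul_exp 4 ⟨2, by norm_num⟩]
  rw [show -(((4:ℕ):ℝ) + 1) / 2 = -((5:ℝ)/2) by norm_num,
    show (((4:ℕ):ℝ) + 1) / 2 = (5:ℝ)/2 by norm_num,
    half_rpow, neg_neg, rpow_5_2, gamma_5_2,
    Real.sqrt_mul (by norm_num : (0:ℝ) ≤ 2)]
  have h2 := sqrt2_pos; have hπ := sqrtpi_pos
  field_simp





section AddHelpers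
variable {α : Type*} [MeasurableSpace α] {μ : Measure α} {f1 f2 f3 f4 f5 : α → ℝ}

lemma intg2 (h1 : Integrable f1 μ) (h2 : Integrable f2 μ) :
    Integrable (fun x => f1 x + f2 x) μ := h1.add h2

lemma intg3 (h1 : Integrable f1 μ) (h2 : Integrable f2 μ) (h3 : Integrable f3 μ) :
    Integrable (fun x => f1 x + f2 x + f3 x) μ := (intg2 h1 h2).add h3

lemma intg4 (h1 : Integrable f1 μ) (h2 : Integrable f2 μ) (h3 : Integrable f3 μ)
    (h4 : Integrable f4 μ) :
    Integrable (fun x => f1 x + f2 x + f3 x + f4 x) μ := (intg3 h1 h2 h3).add h4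

lemma intg5 (h1 : Integrable f1 μ) (h2 : Integrable f2 μ) (h3 : Integrable f3 μ)
    (h4 : Integrable f4 μ) (h5 : Integrable f5 μ) :
    Integrable (fun x => f1 x + f2 x + f3 x + f4 x + f5 x) μ := (intg4 h1 h2 h3 h4).add h5

lemma intv2 (h1 : Integrable f1 μ) (h2 : Integrable f2 μ) :
    ∫ x, (f1 x + f2 x) ∂μ = ∫ x, f1 x ∂μ + ∫ x, f2 x ∂μ := integral_add h1 h2

lemma intv3 (h1 : Integrable f1 μ) (h2 : Integrable f2 μ) (h3 : Integrable f3 μ) :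
    ∫ x, (f1 x + f2 x + f3 x) ∂μ = ∫ x, f1 x ∂μ + ∫ x, f2 x ∂μ + ∫ x, f3 x ∂μ := by
  rw [integral_add (intg2 h1 h2) h3, intv2 h1 h2]

lemma intv4 (h1 : Integrable f1 μ) (h2 : Integrable f2 μ) (h3 : Integrable f3 μ)
    (h4 : Integrable f4 μ) :
    ∫ x, (f1 x + f2 x + f3 x + f4 x) ∂μ
      = ∫ x, f1 x ∂μ + ∫ x, f2 x ∂μ + ∫ x, f3 x ∂μ + ∫ x, f4 x ∂μ := by
  rw [integral_add (intg3 h1 h2 h3) h4, intv3 h1 h2 h3]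

lemma intv5 (h1 : Integrable f1 μ) (h2 : Integrable f2 μ) (h3 : Integrable f3 μ)
    (h4 : Integrable f4 μ) (h5 : Integrable f5 μ) :
    ∫ x, (f1 x + f2 x + f3 x + f4 x + f5 x) ∂μ
      = ∫ x, f1 x ∂μ + ∫ x, f2 x ∂μ + ∫ x, f3 x ∂μ + ∫ x, f4 x ∂μ + ∫ x, f5 x ∂μ := by
  rw [integral_add (intg4 h1 h2 h3 h4) h5, intv4 h1 h2 h3 h4]

end AddHelpers

noncomputable def pid (d : ℕ) : Measure (Fin d → ℝ) :=
  Measure.pi fun _ : Fin d => gaussianReal 0 1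

instance (d : ℕ) : IsProbabilityMeasure (pid d) := by
  unfold pid; infer_instance

lemma pi_moments (d : ℕ) (v : Fin d → ℝ) :
    (Integrable (fun x => (∑ i, v i * x i)) (pid d)
      ∧ ∫ x, (∑ i, v i * x i) ∂(pid d) = 0)
    ∧ (Integrable (fun x => (∑ i, v i * x i) ^ 2) (pid d)
      ∧ ∫ x, (∑ i, v i * x i) ^ 2 ∂(pid d) = ∑ i, v i ^ 2)
    ∧ (Integrable (fun x => (∑ i, v i * x i) ^ 3) (pid d)
      ∧ ∫ x, (∑ i, v i * x i) ^ 3 ∂(pid d) = 0)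
    ∧ (Integrable (fun x => (∑ i, v i * x i) ^ 4) (pid d)
      ∧ ∫ x, (∑ i, v i * x i) ^ 4 ∂(pid d) = 3 * (∑ i, v i ^ 2) ^ 2) := by
  induction d with
  | zero =>
      simp [Finset.univ_eq_empty]
  | succ d IH =>
      obtain ⟨⟨hi1, he1⟩, ⟨hi2, he2⟩, ⟨hi3, he3⟩, ⟨hi4, he4⟩⟩ := IH (fun j => v j.succ)
      set T : (Fin d → ℝ) → ℝ := fun y => ∑ j, v (Fin.succ j) * y j with hT
      set Q' : ℝ := ∑ j, v (Fin.succ j) ^ 2 with hQ'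
      have hQ : (∑ i, v i ^ 2) = v 0 ^ 2 + Q' := by
        rw [Fin.sum_univ_succ]
      set e := MeasurableEquiv.piFinSuccAbove (fun _ : Fin (d + 1) => ℝ) 0 with he
      have mp : MeasurePreserving e (pid (d + 1)) ((gaussianReal 0 1).prod (pid d)) :=
        measurePreserving_piFinSuccAbove (fun _ : Fin (d + 1) => gaussianReal 0 1) 0
      have hSe : ∀ x : Fin (d + 1) → ℝ,
          (∑ i, v i * x i) = v 0 * (e x).1 + T (e x).2 := by
        intro x
        rw [Fin.sum_univ_succ]
        simp [hT, he, MeasurableEquiv.piFinSuccAbove_apply, Fin.insertNthEquiv,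
          Fin.removeNth, Fin.succAbove_zero, Fin.tail]
      -- transfer from the product measure side
      have transfer : ∀ (k : ℕ) (r : ℝ),
          Integrable (fun z : ℝ × (Fin d → ℝ) => (v 0 * z.1 + T z.2) ^ k) ((gaussianReal 0 1).prod (pid d)) →
          (∫ z : ℝ × (Fin d → ℝ), (v 0 * z.1 + T z.2) ^ k ∂((gaussianReal 0 1).prod (pid d)) = r) →
          Integrable (fun x => (∑ i, v i * x i) ^ k) (pid (d + 1))
            ∧ ∫ x, (∑ i, v i * x i) ^ k ∂(pid (d + 1)) = r := by
        intro k r hint hval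
        have hfe : (fun x : Fin (d + 1) → ℝ => (∑ i, v i * x i) ^ k)
            = fun x => (fun z : ℝ × (Fin d → ℝ) => (v 0 * z.1 + T z.2) ^ k) (e x) := by
          funext x; simp only; rw [hSe x]
        constructor
        · rw [hfe]
          exact (mp.integrable_comp_emb e.measurableEmbedding).2 hint
        · rw [hfe, mp.integral_comp' (fun z : ℝ × (Fin d → ℝ) => (v 0 * z.1 + T z.2) ^ k)]
          exact hval
      -- product term facts
      have hterm : ∀ (m : ℕ) (g : (Fin d → ℝ) → ℝ), Integrable g (pid d) →
          Integrable (fun z : ℝ × (Fin d → ℝ) => z.1 ^ m * g z.2) ((gaussianReal 0 1).prod (pid d))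
            ∧ ∫ z : ℝ × (Fin d → ℝ), z.1 ^ m * g z.2 ∂((gaussianReal 0 1).prod (pid d))
              = (∫ x, x ^ m ∂(gaussianReal 0 1)) * ∫ y, g y ∂(pid d) := by
        intro m g hg
        exact ⟨(integrable_pow_gaussianReal m).mul_prod hg, integral_prod_mul _ _⟩
      have hint0 : Integrable (fun y : Fin d → ℝ => (1:ℝ)) (pid d) := integrable_const 1
      have hval0 : ∫ y : Fin d → ℝ, (1:ℝ) ∂(pid d) = 1 := by simp
      have hM0 : ∫ x, x ^ 0 ∂(gaussianReal 0 1) = 1 := by simp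
      have hM1 : ∫ x, x ^ 1 ∂(gaussianReal 0 1) = 0 := by simpa using moment1
      have he2' : ∫ y, T y ^ 2 ∂(pid d) = Q' := he2
      have he3' : ∫ y, T y ^ 3 ∂(pid d) = 0 := he3
      have he4' : ∫ y, T y ^ 4 ∂(pid d) = 3 * Q' ^ 2 := he4
      -- k = 1
      have key1 : Integrable (fun x => (∑ i, v i * x i) ^ 1) (pid (d + 1))
          ∧ ∫ x, (∑ i, v i * x i) ^ 1 ∂(pid (d + 1)) = 0 := by
        have hd : (fun z : ℝ × (Fin d → ℝ) => (v 0 * z.1 + T z.2) ^ 1)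
            = fun z : ℝ × (Fin d → ℝ) => (v 0 ^ 1 * 1 : ℝ) * (z.1 ^ 1 * (1:ℝ)) + (v 0 ^ 0 * 1 : ℝ) * (z.1 ^ 0 * T z.2) := by
          funext z; ring
        have t10 : Integrable (fun z : ℝ × (Fin d → ℝ) => (v 0 ^ 1 * 1 : ℝ) * (z.1 ^ 1 * (1:ℝ))) ((gaussianReal 0 1).prod (pid d)) :=
          (hterm 1 (fun _ : Fin d → ℝ => (1:ℝ)) hint0).1.const_mul _
        have u10 : ∫ z : ℝ × (Fin d → ℝ), (v 0 ^ 1 * 1 : ℝ) * (z.1 ^ 1 * (1:ℝ)) ∂((gaussianReal 0 1).prod (pid d))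
            = (v 0 ^ 1 * 1 : ℝ) * ((∫ x, x ^ 1 ∂(gaussianReal 0 1)) * ∫ y, (fun _ : Fin d → ℝ => (1:ℝ)) y ∂(pid d)) := by
          rw [integral_const_mul, (hterm 1 (fun _ : Fin d → ℝ => (1:ℝ)) hint0).2]
        have t11 : Integrable (fun z : ℝ × (Fin d → ℝ) => (v 0 ^ 0 * 1 : ℝ) * (z.1 ^ 0 * T z.2)) ((gaussianReal 0 1).prod (pid d)) :=
          (hterm 0 T hi1).1.const_mul _
        have u11 : ∫ z : ℝ × (Fin d → ℝ), (v 0 ^ 0 * 1 : ℝ) * (z.1 ^ 0 * T z.2) ∂((gaussianReal 0 1).prod (pid d))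
            = (v 0 ^ 0 * 1 : ℝ) * ((∫ x, x ^ 0 ∂(gaussianReal 0 1)) * ∫ y, T y ∂(pid d)) := by
          rw [integral_const_mul, (hterm 0 T hi1).2]
        refine transfer 1 _ ?_ ?_
        · rw [hd]
          exact intg2 t10 t11
        · rw [hd, intv2 t10 t11, u10, u11]
          simp only [pow_one] at *
          simp only [hM0, hM1, moment2, moment3, moment4, hval0, he1, he2, he3, he4, he2', he3', he4']
          ring
      -- k = 2
      have key2 : Integrable (fun x => (∑ i, v i * x i) ^ 2) (pid (d + 1))
          ∧ ∫ x, (∑ i, v i * x i) ^ 2 ∂(pid (d + 1)) = (v 0 ^ 2 + Q') := by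
        have hd : (fun z : ℝ × (Fin d → ℝ) => (v 0 * z.1 + T z.2) ^ 2)
            = fun z : ℝ × (Fin d → ℝ) => (v 0 ^ 2 * 1 : ℝ) * (z.1 ^ 2 * (1:ℝ)) + (v 0 ^ 1 * 2 : ℝ) * (z.1 ^ 1 * T z.2) + (v 0 ^ 0 * 1 : ℝ) * (z.1 ^ 0 * T z.2 ^ 2) := by
          funext z; ring
        have t20 : Integrable (fun z : ℝ × (Fin d → ℝ) => (v 0 ^ 2 * 1 : ℝ) * (z.1 ^ 2 * (1:ℝ))) ((gaussianReal 0 1).prod (pid d)) :=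
          (hterm 2 (fun _ : Fin d → ℝ => (1:ℝ)) hint0).1.const_mul _
        have u20 : ∫ z : ℝ × (Fin d → ℝ), (v 0 ^ 2 * 1 : ℝ) * (z.1 ^ 2 * (1:ℝ)) ∂((gaussianReal 0 1).prod (pid d))
            = (v 0 ^ 2 * 1 : ℝ) * ((∫ x, x ^ 2 ∂(gaussianReal 0 1)) * ∫ y, (fun _ : Fin d → ℝ => (1:ℝ)) y ∂(pid d)) := by
          rw [integral_const_mul, (hterm 2 (fun _ : Fin d → ℝ => (1:ℝ)) hint0).2]
        have t21 : Integrable (fun z : ℝ × (Fin d → ℝ) => (v 0 ^ 1 * 2 : ℝ) * (z.1 ^ 1 * T z.2)) ((gaussianReal 0 1).prod (pid d)) :=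
          (hterm 1 T hi1).1.const_mul _
        have u21 : ∫ z : ℝ × (Fin d → ℝ), (v 0 ^ 1 * 2 : ℝ) * (z.1 ^ 1 * T z.2) ∂((gaussianReal 0 1).prod (pid d))
            = (v 0 ^ 1 * 2 : ℝ) * ((∫ x, x ^ 1 ∂(gaussianReal 0 1)) * ∫ y, T y ∂(pid d)) := by
          rw [integral_const_mul, (hterm 1 T hi1).2]
        have t22 : Integrable (fun z : ℝ × (Fin d → ℝ) => (v 0 ^ 0 * 1 : ℝ) * (z.1 ^ 0 * T z.2 ^ 2)) ((gaussianReal 0 1).prod (pid d)) :=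
          (hterm 0 (fun y => T y ^ 2) hi2).1.const_mul _
        have u22 : ∫ z : ℝ × (Fin d → ℝ), (v 0 ^ 0 * 1 : ℝ) * (z.1 ^ 0 * T z.2 ^ 2) ∂((gaussianReal 0 1).prod (pid d))
            = (v 0 ^ 0 * 1 : ℝ) * ((∫ x, x ^ 0 ∂(gaussianReal 0 1)) * ∫ y, (fun y => T y ^ 2) y ∂(pid d)) := by
          rw [integral_const_mul, (hterm 0 (fun y => T y ^ 2) hi2).2]
        refine transfer 2 _ ?_ ?_
        · rw [hd]
          exact intg3 t20 t21 t22
        · rw [hd, intv3 t20 t21 t22, u20, u21, u22]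
          simp only [pow_one] at *
          simp only [hM0, hM1, moment2, moment3, moment4, hval0, he1, he2, he3, he4, he2', he3', he4']
          ring
      -- k = 3
      have key3 : Integrable (fun x => (∑ i, v i * x i) ^ 3) (pid (d + 1))
          ∧ ∫ x, (∑ i, v i * x i) ^ 3 ∂(pid (d + 1)) = 0 := by
        have hd : (fun z : ℝ × (Fin d → ℝ) => (v 0 * z.1 + T z.2) ^ 3)
            = fun z : ℝ × (Fin d → ℝ) => (v 0 ^ 3 * 1 : ℝ) * (z.1 ^ 3 * (1:ℝ)) + (v 0 ^ 2 * 3 : ℝ) * (z.1 ^ 2 * T z.2) + (v 0 ^ 1 * 3 : ℝ) * (z.1 ^ 1 * T z.2 ^ 2) + (v 0 ^ 0 * 1 : ℝ) * (z.1 ^ 0 * T z.2 ^ 3) := by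
          funext z; ring
        have t30 : Integrable (fun z : ℝ × (Fin d → ℝ) => (v 0 ^ 3 * 1 : ℝ) * (z.1 ^ 3 * (1:ℝ))) ((gaussianReal 0 1).prod (pid d)) :=
          (hterm 3 (fun _ : Fin d → ℝ => (1:ℝ)) hint0).1.const_mul _
        have u30 : ∫ z : ℝ × (Fin d → ℝ), (v 0 ^ 3 * 1 : ℝ) * (z.1 ^ 3 * (1:ℝ)) ∂((gaussianReal 0 1).prod (pid d))
            = (v 0 ^ 3 * 1 : ℝ) * ((∫ x, x ^ 3 ∂(gaussianReal 0 1)) * ∫ y, (fun _ : Fin d → ℝ => (1:ℝ)) y ∂(pid d)) := by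
          rw [integral_const_mul, (hterm 3 (fun _ : Fin d → ℝ => (1:ℝ)) hint0).2]
        have t31 : Integrable (fun z : ℝ × (Fin d → ℝ) => (v 0 ^ 2 * 3 : ℝ) * (z.1 ^ 2 * T z.2)) ((gaussianReal 0 1).prod (pid d)) :=
          (hterm 2 T hi1).1.const_mul _
        have u31 : ∫ z : ℝ × (Fin d → ℝ), (v 0 ^ 2 * 3 : ℝ) * (z.1 ^ 2 * T z.2) ∂((gaussianReal 0 1).prod (pid d))
            = (v 0 ^ 2 * 3 : ℝ) * ((∫ x, x ^ 2 ∂(gaussianReal 0 1)) * ∫ y, T y ∂(pid d)) := by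
          rw [integral_const_mul, (hterm 2 T hi1).2]
        have t32 : Integrable (fun z : ℝ × (Fin d → ℝ) => (v 0 ^ 1 * 3 : ℝ) * (z.1 ^ 1 * T z.2 ^ 2)) ((gaussianReal 0 1).prod (pid d)) :=
          (hterm 1 (fun y => T y ^ 2) hi2).1.const_mul _
        have u32 : ∫ z : ℝ × (Fin d → ℝ), (v 0 ^ 1 * 3 : ℝ) * (z.1 ^ 1 * T z.2 ^ 2) ∂((gaussianReal 0 1).prod (pid d))
            = (v 0 ^ 1 * 3 : ℝ) * ((∫ x, x ^ 1 ∂(gaussianReal 0 1)) * ∫ y, (fun y => T y ^ 2) y ∂(pid d)) := by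
          rw [integral_const_mul, (hterm 1 (fun y => T y ^ 2) hi2).2]
        have t33 : Integrable (fun z : ℝ × (Fin d → ℝ) => (v 0 ^ 0 * 1 : ℝ) * (z.1 ^ 0 * T z.2 ^ 3)) ((gaussianReal 0 1).prod (pid d)) :=
          (hterm 0 (fun y => T y ^ 3) hi3).1.const_mul _
        have u33 : ∫ z : ℝ × (Fin d → ℝ), (v 0 ^ 0 * 1 : ℝ) * (z.1 ^ 0 * T z.2 ^ 3) ∂((gaussianReal 0 1).prod (pid d))
            = (v 0 ^ 0 * 1 : ℝ) * ((∫ x, x ^ 0 ∂(gaussianReal 0 1)) * ∫ y, (fun y => T y ^ 3) y ∂(pid d)) := by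
          rw [integral_const_mul, (hterm 0 (fun y => T y ^ 3) hi3).2]
        refine transfer 3 _ ?_ ?_
        · rw [hd]
          exact intg4 t30 t31 t32 t33
        · rw [hd, intv4 t30 t31 t32 t33, u30, u31, u32, u33]
          simp only [pow_one] at *
          simp only [hM0, hM1, moment2, moment3, moment4, hval0, he1, he2, he3, he4, he2', he3', he4']
          ring
      -- k = 4
      have key4 : Integrable (fun x => (∑ i, v i * x i) ^ 4) (pid (d + 1))
          ∧ ∫ x, (∑ i, v i * x i) ^ 4 ∂(pid (d + 1)) = (3 * (v 0 ^ 2 + Q') ^ 2) := by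
        have hd : (fun z : ℝ × (Fin d → ℝ) => (v 0 * z.1 + T z.2) ^ 4)
            = fun z : ℝ × (Fin d → ℝ) => (v 0 ^ 4 * 1 : ℝ) * (z.1 ^ 4 * (1:ℝ)) + (v 0 ^ 3 * 4 : ℝ) * (z.1 ^ 3 * T z.2) + (v 0 ^ 2 * 6 : ℝ) * (z.1 ^ 2 * T z.2 ^ 2) + (v 0 ^ 1 * 4 : ℝ) * (z.1 ^ 1 * T z.2 ^ 3) + (v 0 ^ 0 * 1 : ℝ) * (z.1 ^ 0 * T z.2 ^ 4) := by
          funext z; ring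
        have t40 : Integrable (fun z : ℝ × (Fin d → ℝ) => (v 0 ^ 4 * 1 : ℝ) * (z.1 ^ 4 * (1:ℝ))) ((gaussianReal 0 1).prod (pid d)) :=
          (hterm 4 (fun _ : Fin d → ℝ => (1:ℝ)) hint0).1.const_mul _
        have u40 : ∫ z : ℝ × (Fin d → ℝ), (v 0 ^ 4 * 1 : ℝ) * (z.1 ^ 4 * (1:ℝ)) ∂((gaussianReal 0 1).prod (pid d))
            = (v 0 ^ 4 * 1 : ℝ) * ((∫ x, x ^ 4 ∂(gaussianReal 0 1)) * ∫ y, (fun _ : Fin d → ℝ => (1:ℝ)) y ∂(pid d)) := by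
          rw [integral_const_mul, (hterm 4 (fun _ : Fin d → ℝ => (1:ℝ)) hint0).2]
        have t41 : Integrable (fun z : ℝ × (Fin d → ℝ) => (v 0 ^ 3 * 4 : ℝ) * (z.1 ^ 3 * T z.2)) ((gaussianReal 0 1).prod (pid d)) :=
          (hterm 3 T hi1).1.const_mul _
        have u41 : ∫ z : ℝ × (Fin d → ℝ), (v 0 ^ 3 * 4 : ℝ) * (z.1 ^ 3 * T z.2) ∂((gaussianReal 0 1).prod (pid d))
            = (v 0 ^ 3 * 4 : ℝ) * ((∫ x, x ^ 3 ∂(gaussianReal 0 1)) * ∫ y, T y ∂(pid d)) := by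
          rw [integral_const_mul, (hterm 3 T hi1).2]
        have t42 : Integrable (fun z : ℝ × (Fin d → ℝ) => (v 0 ^ 2 * 6 : ℝ) * (z.1 ^ 2 * T z.2 ^ 2)) ((gaussianReal 0 1).prod (pid d)) :=
          (hterm 2 (fun y => T y ^ 2) hi2).1.const_mul _
        have u42 : ∫ z : ℝ × (Fin d → ℝ), (v 0 ^ 2 * 6 : ℝ) * (z.1 ^ 2 * T z.2 ^ 2) ∂((gaussianReal 0 1).prod (pid d))
            = (v 0 ^ 2 * 6 : ℝ) * ((∫ x, x ^ 2 ∂(gaussianReal 0 1)) * ∫ y, (fun y => T y ^ 2) y ∂(pid d)) := by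
          rw [integral_const_mul, (hterm 2 (fun y => T y ^ 2) hi2).2]
        have t43 : Integrable (fun z : ℝ × (Fin d → ℝ) => (v 0 ^ 1 * 4 : ℝ) * (z.1 ^ 1 * T z.2 ^ 3)) ((gaussianReal 0 1).prod (pid d)) :=
          (hterm 1 (fun y => T y ^ 3) hi3).1.const_mul _
        have u43 : ∫ z : ℝ × (Fin d → ℝ), (v 0 ^ 1 * 4 : ℝ) * (z.1 ^ 1 * T z.2 ^ 3) ∂((gaussianReal 0 1).prod (pid d))
            = (v 0 ^ 1 * 4 : ℝ) * ((∫ x, x ^ 1 ∂(gaussianReal 0 1)) * ∫ y, (fun y => T y ^ 3) y ∂(pid d)) := by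
          rw [integral_const_mul, (hterm 1 (fun y => T y ^ 3) hi3).2]
        have t44 : Integrable (fun z : ℝ × (Fin d → ℝ) => (v 0 ^ 0 * 1 : ℝ) * (z.1 ^ 0 * T z.2 ^ 4)) ((gaussianReal 0 1).prod (pid d)) :=
          (hterm 0 (fun y => T y ^ 4) hi4).1.const_mul _
        have u44 : ∫ z : ℝ × (Fin d → ℝ), (v 0 ^ 0 * 1 : ℝ) * (z.1 ^ 0 * T z.2 ^ 4) ∂((gaussianReal 0 1).prod (pid d))
            = (v 0 ^ 0 * 1 : ℝ) * ((∫ x, x ^ 0 ∂(gaussianReal 0 1)) * ∫ y, (fun y => T y ^ 4) y ∂(pid d)) := by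
          rw [integral_const_mul, (hterm 0 (fun y => T y ^ 4) hi4).2]
        refine transfer 4 _ ?_ ?_
        · rw [hd]
          exact intg5 t40 t41 t42 t43 t44
        · rw [hd, intv5 t40 t41 t42 t43 t44, u40, u41, u42, u43, u44]
          simp only [pow_one] at *
          simp only [hM0, hM1, moment2, moment3, moment4, hval0, he1, he2, he3, he4, he2', he3', he4']
          ring
      rw [hQ]
      refine ⟨⟨?_, ?_⟩, key2, key3, key4⟩
      · have := key1.1; simpa using this
      · have := key1.2; simpa using this


end TruncGauss

open MeasureTheory ProbabilityTheory Real Finset Classical in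
/-- A truncated standard Gaussian vector with truncation probability at most
`1/12` is approximately isotropic (Proposition
`trunc_gauss_approximate_isotropic`): `½ I ≼ E[W̄ W̄ᵀ] ≼ I` in the Loewner
order, stated via quadratic forms. -/
theorem truncated_gaussian_approximately_isotropic
    {Ω : Type*} [MeasurableSpace Ω] (P : Measure Ω) [IsProbabilityMeasure P]
    {d : ℕ} (W : Ω → (Fin d → ℝ)) (hWmeas : Measurable W)
    (hW : Measure.map W P = Measure.pi fun _ : Fin d => gaussianReal 0 1)
    (A : Set (Fin d → ℝ)) (hA_meas : MeasurableSet A)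
    (hA : P {ω | W ω ∉ A} ≤ ENNReal.ofReal (1 / 12))
    (Wbar : Ω → (Fin d → ℝ))
    (hWbar : ∀ ω, Wbar ω = if W ω ∈ A then W ω else 0) :
    ∀ v : Fin d → ℝ,
      (1 / 2 : ℝ) * ∑ i, (v i) ^ 2 ≤ ∫ ω, (∑ i, v i * Wbar ω i) ^ 2 ∂P ∧
      ∫ ω, (∑ i, v i * Wbar ω i) ^ 2 ∂P ≤ ∑ i, (v i) ^ 2 := by
  intro v
  set Q : ℝ := ∑ i, v i ^ 2 with hQdef
  have hQnn : 0 ≤ Q := Finset.sum_nonneg fun i _ => sq_nonneg _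
  have hWmap : Measure.map W P = TruncGauss.pid d := hW
  obtain ⟨⟨_, _⟩, ⟨Int2, he2⟩, ⟨_, _⟩, ⟨Int4, he4⟩⟩ := TruncGauss.pi_moments d v
  set f : (Fin d → ℝ) → ℝ := fun x => (∑ i, v i * x i) ^ 2 with hfdef
  have hSmeas : Measurable (fun x : Fin d → ℝ => ∑ i, v i * x i) :=
    Finset.measurable_sum Finset.univ fun i _ => (measurable_pi_apply i).const_mul _
  have hfmeas : Measurable f := hSmeas.pow_const 2
  -- pointwise identity
  have hpt : ∀ ω, (∑ i, v i * Wbar ω i) ^ 2 = A.indicator f (W ω) := by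
    intro ω
    rw [hWbar ω]
    by_cases h : W ω ∈ A
    · rw [if_pos h, Set.indicator_of_mem h]
    · rw [if_neg h, Set.indicator_of_notMem h]
      simp
  -- the integral over Ω equals the integral over the pi measure
  have hI : ∫ ω, (∑ i, v i * Wbar ω i) ^ 2 ∂P = ∫ x, A.indicator f x ∂(TruncGauss.pid d) := by
    have h1 : ∫ ω, (∑ i, v i * Wbar ω i) ^ 2 ∂P = ∫ ω, A.indicator f (W ω) ∂P :=
      integral_congr_ae (Filter.Eventually.of_forall hpt)
    rw [h1, ← integral_map hWmeas.aemeasurable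
      ((hfmeas.indicator hA_meas).aestronglyMeasurable), hWmap]
  -- measure of the complement
  have hπAc : (TruncGauss.pid d) Aᶜ ≤ ENNReal.ofReal (1 / 12) := by
    rw [← hWmap, Measure.map_apply hWmeas hA_meas.compl]
    exact hA
  have hπAcr : ((TruncGauss.pid d) Aᶜ).toReal ≤ 1 / 12 :=
    ENNReal.toReal_le_of_le_ofReal (by norm_num) hπAc
  -- nonnegativity of f
  have hfnn : ∀ x, 0 ≤ f x := fun x => sq_nonneg _
  have IntA : Integrable (A.indicator f) (TruncGauss.pid d) := Int2.indicator hA_meas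
  have IntAc : Integrable (Aᶜ.indicator f) (TruncGauss.pid d) := Int2.indicator hA_meas.compl
  -- splitting
  have hsplit : ∫ x, A.indicator f x ∂(TruncGauss.pid d) + ∫ x, Aᶜ.indicator f x ∂(TruncGauss.pid d) = Q := by
    rw [← integral_add IntA IntAc]
    have h : (fun x => A.indicator f x + Aᶜ.indicator f x) = f := by
      funext x; exact congrFun (Set.indicator_self_add_compl A f) x
    rw [h]
    exact he2
  -- upper bound
  have hupper : ∫ x, A.indicator f x ∂(TruncGauss.pid d) ≤ Q := by
    calc ∫ x, A.indicator f x ∂(TruncGauss.pid d) ≤ ∫ x, f x ∂(TruncGauss.pid d) :=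
          integral_mono IntA Int2 (Set.indicator_le_self' fun x _ => hfnn x)
      _ = Q := he2
  constructor
  swap
  · rw [hI]; exact hupper
  -- lower bound
  by_cases hQ0 : Q = 0
  · have hv : ∀ i ∈ Finset.univ, v i ^ 2 = 0 := by
      intro i _
      exact (Finset.sum_eq_zero_iff_of_nonneg (fun i _ => sq_nonneg (v i))).mp hQ0 i
        (Finset.mem_univ i)
    have hv' : ∀ i, v i = 0 := fun i => pow_eq_zero_iff (two_ne_zero).elim
      |>.mp (hv i (Finset.mem_univ i))
    have : ∀ ω, (∑ i, v i * Wbar ω i) ^ 2 = 0 := by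
      intro ω
      have : (∑ i, v i * Wbar ω i) = 0 :=
        Finset.sum_eq_zero fun i _ => by rw [hv' i, zero_mul]
      rw [this]; ring
    rw [hQ0] at hQdef ⊢
    simp only [this]
    simp
  · have hQpos : 0 < Q := lt_of_le_of_ne hQnn (Ne.symm hQ0)
    -- AM-GM pointwise bound
    have hgint1 : Integrable (fun x => 3 * Q * Aᶜ.indicator (fun _ => (1:ℝ)) x) (TruncGauss.pid d) :=
      ((integrable_const (1:ℝ)).indicator hA_meas.compl).const_mul _
    have hf2eq : (fun x => f x ^ 2) = fun x => (∑ i, v i * x i) ^ 4 := by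
      funext x; rw [hfdef]; ring
    have hgint2 : Integrable (fun x => f x ^ 2 / (12 * Q)) (TruncGauss.pid d) := by
      rw [hf2eq.symm] at Int4
      exact Int4.div_const _
    have hgpt : ∀ x, Aᶜ.indicator f x
        ≤ 3 * Q * Aᶜ.indicator (fun _ => (1:ℝ)) x + f x ^ 2 / (12 * Q) := by
      intro x
      by_cases h : x ∈ Aᶜ
      · rw [Set.indicator_of_mem h, Set.indicator_of_mem h]
        have h4 : (0:ℝ) < 12 * Q := by linarith
        have hident : 3 * Q * 1 + f x ^ 2 / (12 * Q) - f x
            = (6 * Q - f x) ^ 2 / (12 * Q) := by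
          field_simp; ring
        have hnn : 0 ≤ (6 * Q - f x) ^ 2 / (12 * Q) := div_nonneg (sq_nonneg _) h4.le
        linarith
      · rw [Set.indicator_of_notMem h, Set.indicator_of_notMem h]
        positivity
    have hgval : ∫ x, (3 * Q * Aᶜ.indicator (fun _ => (1:ℝ)) x + f x ^ 2 / (12 * Q))
        ∂(TruncGauss.pid d) ≤ Q / 2 := by
      rw [TruncGauss.intv2 hgint1 hgint2]
      have h1 : ∫ x, 3 * Q * Aᶜ.indicator (fun _ => (1:ℝ)) x ∂(TruncGauss.pid d)
          = 3 * Q * ((TruncGauss.pid d) Aᶜ).toReal := by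
        rw [integral_const_mul, integral_indicator_const (1:ℝ) hA_meas.compl]
        simp [Measure.real]
      have h2 : ∫ x, f x ^ 2 / (12 * Q) ∂(TruncGauss.pid d) = (3 * Q ^ 2) / (12 * Q) := by
        rw [integral_div]
        congr 1
        rw [show (fun x => f x ^ 2) = fun x => (∑ i, v i * x i) ^ 4 from hf2eq]
        exact he4
      rw [h1, h2]
      have : 3 * Q ^ 2 / (12 * Q) = Q / 4 := by
        field_simp
        ring
      rw [this]
      nlinarith [hπAcr, hQpos]
    have hlowAc : ∫ x, Aᶜ.indicator f x ∂(TruncGauss.pid d) ≤ Q / 2 :=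
      le_trans (integral_mono IntAc (TruncGauss.intg2 hgint1 hgint2) hgpt) hgval
    rw [hI]
    linarith [hsplit, hlowAc]
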